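/- (Theorem 1, part 2, converse direction.) Let Φ_x ∈ ℝ^{(T+1)n×(T+1)n} and Φ_u ∈ ℝ^{(T+1)p×(T+1)n} be block lower triangular matrices satisfying (I − ZÂ)Φ_x − ZB̂Φ_u = I. Then Φ_x is invertible, the controller K := Φ_u · Φ_x^{-1} is block lower triangular, I − Z(Â + B̂K) is invertible, and the closed loop achieves the given responses: (I − Z(Â + B̂K))^{-1} = Φ_x and K·(I − Z(Â + B̂K))^{-1} = Φ_u. -/

import Mathlib

/-- Block lower triangular: the `((t,i),(s,j))` entry vanishes whenever `s > t`. -/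
def BlockLT {a b T : ℕ}
    (M : Matrix (Fin (T + 1) × Fin a) (Fin (T + 1) × Fin b) ℝ) : Prop :=
  ∀ (t s : Fin (T + 1)) (i : Fin a) (j : Fin b), t < s → M (t, i) (s, j) = 0

/-- Strictly block lower triangular: the `((t,i),(s,j))` entry vanishes whenever `s ≥ t`. -/
def StrictBlockLT {a b T : ℕ}
    (M : Matrix (Fin (T + 1) × Fin a) (Fin (T + 1) × Fin b) ℝ) : Prop :=
  ∀ (t s : Fin (T + 1)) (i : Fin a) (j : Fin b), t ≤ s → M (t, i) (s, j) = 0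

/-- The block-downshift matrix `Z`: the `((t,i),(s,j))` entry is `1` iff `t = s + 1` and `i = j`. -/
def shiftZ (n T : ℕ) : Matrix (Fin (T + 1) × Fin n) (Fin (T + 1) × Fin n) ℝ :=
  fun r c => if (r.1 : ℕ) = (c.1 : ℕ) + 1 ∧ r.2 = c.2 then 1 else 0

/-- `Â = blkdiag(A, …, A)`. -/
def hatA {n : ℕ} (T : ℕ) (A : Matrix (Fin n) (Fin n) ℝ) :
    Matrix (Fin (T + 1) × Fin n) (Fin (T + 1) × Fin n) ℝ :=
  fun r c => if r.1 = c.1 then A r.2 c.2 else 0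

/-- `B̂ = blkdiag(B, …, B, 0)`. -/
def hatB {n p : ℕ} (T : ℕ) (B : Matrix (Fin n) (Fin p) ℝ) :
    Matrix (Fin (T + 1) × Fin n) (Fin (T + 1) × Fin p) ℝ :=
  fun r c => if r.1 = c.1 ∧ (c.1 : ℕ) < T then B r.2 c.2 else 0

lemma blockLT_mul {a b c T : ℕ} {M : Matrix (Fin (T+1) × Fin a) (Fin (T+1) × Fin b) ℝ}
    {N : Matrix (Fin (T+1) × Fin b) (Fin (T+1) × Fin c) ℝ}
    (hM : BlockLT M) (hN : BlockLT N) : BlockLT (M * N) := by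
  intro t s i j hts
  rw [Matrix.mul_apply]
  apply Finset.sum_eq_zero
  rintro ⟨r, m⟩ -
  by_cases h : t < r
  · rw [hM t r i m h, zero_mul]
  · rw [hN r s m j (lt_of_le_of_lt (not_lt.mp h) hts), mul_zero]

lemma blockLT_one {a T : ℕ} :
    BlockLT (1 : Matrix (Fin (T+1) × Fin a) (Fin (T+1) × Fin a) ℝ) := by
  intro t s i j hts
  apply Matrix.one_apply_ne
  intro h
  exact absurd (congrArg Prod.fst h) (by simpa using hts.ne)

lemma blockLT_hatA {n T : ℕ} (A : Matrix (Fin n) (Fin n) ℝ) : BlockLT (hatA T A) := by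
  intro t s i j hts
  simp [hatA, hts.ne]

lemma blockLT_hatB {n p T : ℕ} (B : Matrix (Fin n) (Fin p) ℝ) : BlockLT (hatB T B) := by
  intro t s i j hts
  simp [hatB, hts.ne]

lemma strict_shiftZ_mul {n b T : ℕ}
    {L : Matrix (Fin (T+1) × Fin n) (Fin (T+1) × Fin b) ℝ} (hL : BlockLT L) :
    StrictBlockLT (shiftZ n T * L) := by
  intro t s i j hts
  rw [Matrix.mul_apply]
  apply Finset.sum_eq_zero
  rintro ⟨r, m⟩ -
  by_cases h : (t : ℕ) = (r : ℕ) + 1 ∧ i = m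
  · have hrs : r < s := by
      have : (r : ℕ) < (s : ℕ) := by omega
      exact this
    rw [hL r s m j hrs, mul_zero]
  · rw [show shiftZ n T (t, i) (r, m) = 0 by simp [shiftZ, h], zero_mul]

lemma strict_pow {a T : ℕ} {N : Matrix (Fin (T+1) × Fin a) (Fin (T+1) × Fin a) ℝ}
    (hN : StrictBlockLT N) (k : ℕ) (t s : Fin (T+1)) (i j : Fin a)
    (h : (t : ℕ) < (s : ℕ) + k) : (N ^ k) (t, i) (s, j) = 0 := by
  induction k generalizing t s i j with
  | zero =>
    rw [pow_zero]
    apply Matrix.one_apply_ne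
    intro he
    have := congrArg Prod.fst he
    simp only at this
    omega
  | succ k ih =>
    rw [pow_succ, Matrix.mul_apply]
    apply Finset.sum_eq_zero
    rintro ⟨r, m⟩ -
    by_cases hr : (t : ℕ) < (r : ℕ) + k
    · rw [ih t r i m hr, zero_mul]
    · have : r ≤ s := by
        have : (r : ℕ) ≤ (s : ℕ) := by omega
        exact this
      rw [hN r s m j this, mul_zero]

lemma blockLT_pow {a T : ℕ} {N : Matrix (Fin (T+1) × Fin a) (Fin (T+1) × Fin a) ℝ}
    (hN : BlockLT N) (k : ℕ) : BlockLT (N ^ k) := by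
  induction k with
  | zero => simpa using (blockLT_one : BlockLT (1 : Matrix (Fin (T+1) × Fin a) _ ℝ))
  | succ k ih => rw [pow_succ]; exact blockLT_mul ih hN

lemma blockLT_neg {a b T : ℕ} {M : Matrix (Fin (T+1) × Fin a) (Fin (T+1) × Fin b) ℝ}
    (hM : BlockLT M) : BlockLT (-M) := by
  intro t s i j hts
  rw [Matrix.neg_apply, hM t s i j hts, neg_zero]

set_option maxHeartbeats 800000 in
/-- Theorem 1, part 2 (converse). If block lower triangular `Φ_x, Φ_u` satisfy
`(I − ZÂ)Φ_x − ZB̂Φ_u = I`, then `Φ_x` is invertible, `K := Φ_u Φ_x⁻¹` is block lower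
triangular, `I − Z(Â + B̂K)` is invertible, and the closed loop achieves the responses:
`(I − Z(Â + B̂K))⁻¹ = Φ_x` and `K (I − Z(Â + B̂K))⁻¹ = Φ_u`. -/
theorem sls_converse {n p T : ℕ}
    (A : Matrix (Fin n) (Fin n) ℝ) (B : Matrix (Fin n) (Fin p) ℝ)
    (Φx : Matrix (Fin (T + 1) × Fin n) (Fin (T + 1) × Fin n) ℝ)
    (Φu : Matrix (Fin (T + 1) × Fin p) (Fin (T + 1) × Fin n) ℝ)
    (hx : BlockLT Φx) (hu : BlockLT Φu)
    (haff : (1 - shiftZ n T * hatA T A) * Φx - shiftZ n T * hatB T B * Φu = 1) :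
    IsUnit Φx ∧
    BlockLT (Φu * Φx⁻¹) ∧
    IsUnit (1 - shiftZ n T * (hatA T A + hatB T B * (Φu * Φx⁻¹))) ∧
    (1 - shiftZ n T * (hatA T A + hatB T B * (Φu * Φx⁻¹)))⁻¹ = Φx ∧
    (Φu * Φx⁻¹) * (1 - shiftZ n T * (hatA T A + hatB T B * (Φu * Φx⁻¹)))⁻¹ = Φu := by
  set Z := shiftZ n T
  set Ah := hatA T A
  set Bh := hatB T B
  -- N := Z * (Ah * Φx + Bh * Φu), strictly block lower triangular
  set N : Matrix (Fin (T + 1) × Fin n) (Fin (T + 1) × Fin n) ℝ :=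
    Z * (Ah * Φx + Bh * Φu) with hNdef
  have hNstrict : StrictBlockLT N :=
    strict_shiftZ_mul (by
      intro t s i j hts
      have h1 := blockLT_mul (blockLT_hatA A) hx t s i j hts
      have h2 := blockLT_mul (blockLT_hatB B) hu t s i j hts
      simp [Matrix.add_apply, Ah, Bh, h1, h2])
  have hNlt : BlockLT N := fun t s i j hts => hNstrict t s i j hts.le
  have hΦx : Φx = 1 + N := by
    rw [hNdef, mul_add, ← Matrix.mul_assoc Z Ah Φx, ← Matrix.mul_assoc Z Bh Φu]
    have h := haff
    rw [sub_mul, one_mul] at h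
    linear_combination (norm := noncomm_ring) h
  -- nilpotency
  have hNnil : N ^ (T + 1) = 0 := by
    ext ⟨t, i⟩ ⟨s, j⟩
    rw [Matrix.zero_apply]
    exact strict_pow hNstrict (T + 1) t s i j (by omega)
  -- geometric series inverse
  set S : Matrix (Fin (T + 1) × Fin n) (Fin (T + 1) × Fin n) ℝ :=
    ∑ k ∈ Finset.range (T + 1), (-N) ^ k with hSdef
  have hkey : ∀ m : ℕ, (1 + N) * (∑ k ∈ Finset.range m, (-N) ^ k) = 1 - (-N) ^ m := by
    intro m
    induction m with
    | zero => simp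
    | succ m ih =>
      rw [Finset.sum_range_succ, mul_add, ih, add_mul, one_mul]
      have hc : N * (-N) ^ m = -(-N) ^ (m + 1) := by
        rw [pow_succ', neg_mul, neg_neg]
      rw [hc]
      abel
  have hmul : Φx * S = 1 := by
    rw [hΦx, hSdef, hkey, neg_pow, hNnil, mul_zero, sub_zero]
  have hSlt : BlockLT S := by
    intro t s i j hts
    rw [hSdef, Matrix.sum_apply]
    apply Finset.sum_eq_zero
    intro k _
    exact blockLT_pow (blockLT_neg hNlt) k t s i j hts
  have hmul' : S * Φx = 1 := mul_eq_one_comm.mp hmul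
  have hunit : IsUnit Φx := by
    apply Matrix.isUnit_iff_isUnit_det _ |>.mpr
    have := congrArg Matrix.det hmul
    rw [Matrix.det_mul, Matrix.det_one] at this
    exact IsUnit.of_mul_eq_one _ this
  have hinvS : Φx⁻¹ = S := Matrix.inv_eq_right_inv hmul
  have hinvmul : Φx⁻¹ * Φx = 1 := by rw [hinvS]; exact hmul'
  set K := Φu * Φx⁻¹ with hKdef
  have hKΦx : K * Φx = Φu := by rw [hKdef, Matrix.mul_assoc, hinvmul, Matrix.mul_one]
  set M : Matrix (Fin (T + 1) × Fin n) (Fin (T + 1) × Fin n) ℝ :=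
    1 - Z * (Ah + Bh * K) with hMdef
  have hMΦx : M * Φx = 1 := by
    have h := haff
    rw [sub_mul, one_mul] at h
    rw [hMdef, sub_mul, one_mul, mul_add, add_mul,
      Matrix.mul_assoc Z (Bh * K) Φx, Matrix.mul_assoc Bh K Φx, hKΦx,
      ← Matrix.mul_assoc Z Bh Φu, sub_add_eq_sub_sub]
    exact h
  have hMunit : IsUnit M := by
    apply Matrix.isUnit_iff_isUnit_det _ |>.mpr
    have := congrArg Matrix.det hMΦx
    rw [Matrix.det_mul, Matrix.det_one] at this
    exact IsUnit.of_mul_eq_one _ this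
  have hMinv : M⁻¹ = Φx := Matrix.inv_eq_right_inv hMΦx
  refine ⟨hunit, ?_, hMunit, hMinv, ?_⟩
  · rw [hKdef, hinvS]; exact blockLT_mul hu hSlt
  · rw [hMinv, hKΦx]
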